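/- arXiv:1708.01463 — 2 statements merged into one kernel-verified Lean document; each statement's English description precedes it below -/
import Mathlib

section
/- Let χ : ℝⁿ → ℝ be a kernel (satisfying (χ1), (χ2), (χ3) and m_0(χ) < ∞), and let f : ℝⁿ → ℝ be bounded and uniformly continuous on ℝⁿ. Then lim_{w → ∞} ‖S_w f − f‖_∞ = 0, i.e., lim_{w → ∞} sup_{x ∈ ℝⁿ} |(S_w f)(x) − f(x)| = 0. -/
open MeasureTheory Filter

noncomputable def latticePt (n : ℕ) (k : Fin n → ℤ) : EuclideanSpace ℝ (Fin n) :=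
  WithLp.toLp 2 (fun i => (k i : ℝ))

/-- Discrete absolute moment of order `β`. -/
noncomputable def mom (n : ℕ) (χ : EuclideanSpace ℝ (Fin n) → ℝ) (β : ℝ) : ENNReal :=
  ⨆ u : EuclideanSpace ℝ (Fin n), ∑' k : Fin n → ℤ,
    ENNReal.ofReal (|χ (u - latticePt n k)| * ‖u - latticePt n k‖ ^ β)

/-- The cell `R_k^w`. -/
def cell (n : ℕ) (w : ℝ) (k : Fin n → ℤ) : Set (EuclideanSpace ℝ (Fin n)) :=
  {u | ∀ i, u i ∈ Set.Icc ((k i : ℝ) / w) (((k i : ℝ) + 1) / w)}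

/-- Sampling Kantorovich operator. -/
noncomputable def SK (n : ℕ) (χ f : EuclideanSpace ℝ (Fin n) → ℝ) (w : ℝ)
    (x : EuclideanSpace ℝ (Fin n)) : ℝ :=
  ∑' k : Fin n → ℤ, χ (w • x - latticePt n k) * (w ^ n * ∫ u in cell n w k, f u)



lemma cell_eq (n : ℕ) (w : ℝ) (k : Fin n → ℤ) :
    cell n w k = (MeasurableEquiv.toLp 2 (Fin n → ℝ)).symm ⁻¹'
      (Set.univ.pi fun i => Set.Icc ((k i : ℝ) / w) (((k i : ℝ) + 1) / w)) := by
  ext u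
  simp only [cell, Set.mem_preimage, Set.mem_pi, Set.mem_univ, forall_true_left,
    Set.mem_setOf_eq, true_implies]
  rfl

lemma cell_meas (n : ℕ) (w : ℝ) (k : Fin n → ℤ) : MeasurableSet (cell n w k) := by
  rw [cell_eq]
  exact (MeasurableEquiv.toLp 2 (Fin n → ℝ)).symm.measurable
    (MeasurableSet.univ_pi fun i => measurableSet_Icc)

lemma cell_vol (n : ℕ) {w : ℝ} (hw : 0 < w) (k : Fin n → ℤ) :
    volume (cell n w k) = ENNReal.ofReal ((1/w)^n) := by
  rw [cell_eq, (EuclideanSpace.volume_preserving_symm_measurableEquiv_toLp (Fin n)).measure_preimage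
    (MeasurableSet.univ_pi fun i => measurableSet_Icc).nullMeasurableSet]
  rw [volume_pi_pi]
  have : ∀ i : Fin n, volume (Set.Icc ((k i : ℝ) / w) (((k i : ℝ) + 1) / w))
      = ENNReal.ofReal (1/w) := by
    intro i
    rw [Real.volume_Icc]
    congr 1
    field_simp
    ring
  simp only [this, Finset.prod_const, Finset.card_univ, Fintype.card_fin]
  rw [← ENNReal.ofReal_pow (by positivity)]




lemma mom_summable {n : ℕ} {χ : EuclideanSpace ℝ (Fin n) → ℝ} {β : ℝ}
    (h : mom n χ β < ⊤) (u : EuclideanSpace ℝ (Fin n)) :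
    Summable (fun k : Fin n → ℤ => |χ (u - latticePt n k)| * ‖u - latticePt n k‖ ^ β)
    ∧ ∑' k : Fin n → ℤ, |χ (u - latticePt n k)| * ‖u - latticePt n k‖ ^ β
      ≤ (mom n χ β).toReal := by
  have hle : (∑' k : Fin n → ℤ,
      ENNReal.ofReal (|χ (u - latticePt n k)| * ‖u - latticePt n k‖ ^ β)) ≤ mom n χ β :=
    le_iSup (fun u => ∑' k : Fin n → ℤ,
      ENNReal.ofReal (|χ (u - latticePt n k)| * ‖u - latticePt n k‖ ^ β)) u
  have hne : (∑' k : Fin n → ℤ,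
      ENNReal.ofReal (|χ (u - latticePt n k)| * ‖u - latticePt n k‖ ^ β)) ≠ ⊤ :=
    (lt_of_le_of_lt hle h).ne
  have hnn : ∀ k : Fin n → ℤ, 0 ≤ |χ (u - latticePt n k)| * ‖u - latticePt n k‖ ^ β :=
    fun k => mul_nonneg (abs_nonneg _) (Real.rpow_nonneg (norm_nonneg _) _)
  have hsum := ENNReal.summable_toReal hne
  simp only [ENNReal.toReal_ofReal (hnn _)] at hsum
  refine ⟨hsum, ?_⟩
  have heq := ENNReal.tsum_toReal_eq
    (f := fun k : Fin n → ℤ =>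
      ENNReal.ofReal (|χ (u - latticePt n k)| * ‖u - latticePt n k‖ ^ β))
    (fun k => ENNReal.ofReal_ne_top)
  calc ∑' k : Fin n → ℤ, |χ (u - latticePt n k)| * ‖u - latticePt n k‖ ^ β
      = (∑' k : Fin n → ℤ,
        ENNReal.ofReal (|χ (u - latticePt n k)| * ‖u - latticePt n k‖ ^ β)).toReal := by
        rw [heq]; simp only [ENNReal.toReal_ofReal (hnn _)]
    _ ≤ (mom n χ β).toReal := ENNReal.toReal_mono h.ne hle

lemma mom0_summable {n : ℕ} {χ : EuclideanSpace ℝ (Fin n) → ℝ}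
    (h : mom n χ 0 < ⊤) (u : EuclideanSpace ℝ (Fin n)) :
    Summable (fun k : Fin n → ℤ => |χ (u - latticePt n k)|)
    ∧ ∑' k : Fin n → ℤ, |χ (u - latticePt n k)| ≤ (mom n χ 0).toReal := by
  have := mom_summable h u
  simpa only [Real.rpow_zero, mul_one] using this




lemma cell_close {n : ℕ} {w : ℝ} (hw : 0 < w) {k : Fin n → ℤ}
    {u : EuclideanSpace ℝ (Fin n)} (hu : u ∈ cell n w k) :
    ‖u - (w⁻¹ : ℝ) • latticePt n k‖ ≤ Real.sqrt n / w := by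
  rw [EuclideanSpace.norm_eq]
  have hb : ∀ i, ‖(u - (w⁻¹ : ℝ) • latticePt n k) i‖ ^ 2 ≤ (1/w)^2 := by
    intro i
    have h1 : (u - (w⁻¹ : ℝ) • latticePt n k) i = u i - (k i : ℝ) / w := by
      simp [latticePt, div_eq_inv_mul]
    have h2 := hu i
    rw [h1]
    have : |u i - (k i : ℝ) / w| ≤ 1/w := by
      rw [abs_le]
      constructor
      · have := h2.1; nlinarith [one_div_pos.mpr hw]
      · have := h2.2
        have h3 : ((k i : ℝ) + 1)/w = (k i : ℝ)/w + 1/w := by ring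
        nlinarith [h3 ▸ this]
    calc ‖u i - (k i : ℝ) / w‖ ^ 2 = |u i - (k i : ℝ)/w| ^ 2 := rfl
      _ ≤ (1/w)^2 := by
          apply sq_le_sq' <;> nlinarith [abs_nonneg (u i - (k i : ℝ)/w)]
  calc Real.sqrt (∑ i, ‖(u - (w⁻¹ : ℝ) • latticePt n k) i‖ ^ 2)
      ≤ Real.sqrt (∑ _i : Fin n, (1/w)^2) :=
        Real.sqrt_le_sqrt (Finset.sum_le_sum fun i _ => hb i)
    _ = Real.sqrt n / w := by
        rw [Finset.sum_const, Finset.card_univ, Fintype.card_fin, nsmul_eq_mul]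
        rw [Real.sqrt_mul (by positivity), Real.sqrt_sq (by positivity)]
        ring

lemma near_dist {n : ℕ} {w δ : ℝ} (hw : 0 < w) (hδ : 0 < δ)
    (hwn : Real.sqrt n / w ≤ δ/4) {k : Fin n → ℤ} {x u : EuclideanSpace ℝ (Fin n)}
    (hu : u ∈ cell n w k) (hk : ‖w • x - latticePt n k‖ ≤ w*δ/4) :
    ‖u - x‖ ≤ δ/2 := by
  have h1 : ‖u - x‖ ≤ ‖u - (w⁻¹ : ℝ) • latticePt n k‖ + ‖(w⁻¹ : ℝ) • latticePt n k - x‖ := by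
    have := norm_sub_le (u - (w⁻¹ : ℝ) • latticePt n k) (x - (w⁻¹ : ℝ) • latticePt n k)
    simpa [norm_sub_rev ((w⁻¹ : ℝ) • latticePt n k) x, sub_sub_sub_cancel_right] using this
  have h2 : (w⁻¹ : ℝ) • latticePt n k - x = (w⁻¹ : ℝ) • (latticePt n k - w • x) := by
    rw [smul_sub, smul_smul, inv_mul_cancel₀ hw.ne', one_smul]
  have h3 : ‖(w⁻¹ : ℝ) • latticePt n k - x‖ ≤ δ/4 := by
    rw [h2, norm_smul, norm_sub_rev]
    have : ‖(w⁻¹ : ℝ)‖ = w⁻¹ := by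
      rw [Real.norm_eq_abs, abs_of_pos (inv_pos.mpr hw)]
    rw [this]
    calc w⁻¹ * ‖w • x - latticePt n k‖ ≤ w⁻¹ * (w*δ/4) := by
          apply mul_le_mul_of_nonneg_left hk (inv_pos.mpr hw).le
      _ = δ/4 := by field_simp
  have h4 := cell_close hw hu
  linarith





lemma int_est {n : ℕ} {w : ℝ} (hw : 0 < w) (k : Fin n → ℤ)
    {f : EuclideanSpace ℝ (Fin n) → ℝ} (hfmeas : Measurable f)
    {B : ℝ} (hfbd : ∀ x, |f x| ≤ B)
    {c C : ℝ} (hC : ∀ u ∈ cell n w k, |f u - c| ≤ C) :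
    |w^n * (∫ u in cell n w k, f u) - c| ≤ C := by
  have hvol := cell_vol n hw k
  have hlt : volume (cell n w k) < ⊤ := by rw [hvol]; exact ENNReal.ofReal_lt_top
  have htr : volume.real (cell n w k) = (1/w)^n := by
    rw [Measure.real, hvol, ENNReal.toReal_ofReal (by positivity)]
  have hint : |∫ u in cell n w k, (f u - c)| ≤ C * (1/w)^n := by
    rw [← htr]
    exact norm_setIntegral_le_of_norm_le_const (f := fun u => f u - c) hlt (fun u hu => hC u hu)
  -- integrability
  haveI : IsFiniteMeasure (volume.restrict (cell n w k)) := by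
    constructor
    rw [Measure.restrict_apply_univ]
    exact hlt
  have hfint : IntegrableOn f (cell n w k) volume :=
    ⟨hfmeas.aestronglyMeasurable, HasFiniteIntegral.of_bounded (C := B) (ae_of_all _ hfbd)⟩
  have hcint : IntegrableOn (fun _ => c) (cell n w k) volume :=
    integrableOn_const hlt.ne
  have h1 : ∫ u in cell n w k, (f u - c) = (∫ u in cell n w k, f u) - c * (1/w)^n := by
    rw [integral_sub hfint hcint, setIntegral_const, htr, smul_eq_mul, mul_comm]
  have hw1 : w^n * ((1:ℝ)/w)^n = 1 := by
    rw [← mul_pow, mul_one_div, div_self hw.ne', one_pow]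
  have h2 : w^n * (∫ u in cell n w k, f u) - c = w^n * ∫ u in cell n w k, (f u - c) := by
    rw [h1, mul_sub, mul_comm c ((1/w)^n), ← mul_assoc, hw1, one_mul]
  rw [h2, abs_mul, abs_of_pos (pow_pos hw n)]
  calc w^n * |∫ u in cell n w k, (f u - c)| ≤ w^n * (C * (1/w)^n) :=
        mul_le_mul_of_nonneg_left hint (pow_pos hw n).le
    _ = C := by rw [mul_comm C, ← mul_assoc, hw1, one_mul]










set_option maxHeartbeats 1000000 in
lemma pointwise_bound {n : ℕ} {χ f : EuclideanSpace ℝ (Fin n) → ℝ}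
    (hχ2 : ∀ y : EuclideanSpace ℝ (Fin n), ∑' k : Fin n → ℤ, χ (y - latticePt n k) = 1)
    {β : ℝ} (hβ : 0 < β) (hmβ : mom n χ β < ⊤) (hχ0 : mom n χ 0 < ⊤)
    (hfmeas : Measurable f) {B : ℝ} (hfbd : ∀ x, |f x| ≤ B) (hB0 : 0 ≤ B)
    {w δ ε0 : ℝ} (hw : 0 < w) (hδ : 0 < δ) (hε0 : 0 ≤ ε0)
    (hwn : Real.sqrt n / w ≤ δ/4)
    (hδf : ∀ u x : EuclideanSpace ℝ (Fin n), ‖u - x‖ ≤ δ/2 → |f u - f x| ≤ ε0)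
    (x : EuclideanSpace ℝ (Fin n)) :
    |SK n χ f w x - f x| ≤ ε0 * (mom n χ 0).toReal
      + (2*B/(w*δ/4)^β) * (mom n χ β).toReal := by
  set wx := w • x with hwx
  set a : (Fin n → ℤ) → ℝ := fun k => χ (wx - latticePt n k) with ha
  set I : (Fin n → ℤ) → ℝ := fun k => w^n * ∫ u in cell n w k, f u with hI
  set c2 : ℝ := 2*B/(w*δ/4)^β with hc2
  have hcpos : 0 < (w*δ/4)^β := Real.rpow_pos_of_pos (by positivity) β
  have hc2nn : 0 ≤ c2 := div_nonneg (by linarith) hcpos.le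
  obtain ⟨hsa0, hta0⟩ := mom0_summable hχ0 wx
  obtain ⟨hsaβ, htaβ⟩ := mom_summable hmβ wx
  have hsa : Summable a := hsa0.of_abs
  -- bounds on I
  have hIbd : ∀ k, |I k - f x| ≤ 2*B := by
    intro k
    exact int_est hw k hfmeas hfbd (fun u _ => by
      have := abs_sub_abs_le_abs_sub (f u) (f x)
      calc |f u - f x| ≤ |f u| + |f x| := abs_sub (f u) (f x)
        _ ≤ 2*B := by linarith [hfbd u, hfbd x])
  have hInear : ∀ k, ‖wx - latticePt n k‖ ≤ w*δ/4 → |I k - f x| ≤ ε0 := by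
    intro k hk
    exact int_est hw k hfmeas hfbd (fun u hu => hδf u x (near_dist hw hδ hwn hu hk))
  -- termwise bound
  set h : (Fin n → ℤ) → ℝ :=
    fun k => ε0 * |a k| + c2 * (|a k| * ‖wx - latticePt n k‖ ^ β) with hh
  have hterm : ∀ k, |a k * (I k - f x)| ≤ h k := by
    intro k
    rw [abs_mul]
    by_cases hk : ‖wx - latticePt n k‖ ≤ w*δ/4
    · have h1 : |a k| * |I k - f x| ≤ ε0 * |a k| := by
        rw [mul_comm]
        exact mul_le_mul_of_nonneg_right (hInear k hk) (abs_nonneg _)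
      have h2 : 0 ≤ c2 * (|a k| * ‖wx - latticePt n k‖ ^ β) :=
        mul_nonneg hc2nn (mul_nonneg (abs_nonneg _) (Real.rpow_nonneg (norm_nonneg _) _))
      simp only [hh]; linarith
    · push_neg at hk
      have hrp : (w*δ/4)^β ≤ ‖wx - latticePt n k‖ ^ β :=
        Real.rpow_le_rpow (by positivity) hk.le hβ.le
      have h1 : |a k| * |I k - f x| ≤ |a k| * (2*B) :=
        mul_le_mul_of_nonneg_left (hIbd k) (abs_nonneg _)
      have h2 : |a k| * (2*B) ≤ c2 * (|a k| * ‖wx - latticePt n k‖ ^ β) := by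
        rw [hc2, div_mul_eq_mul_div, le_div_iff₀ hcpos]
        have h4 := mul_le_mul_of_nonneg_left hrp
          (mul_nonneg (abs_nonneg (a k)) (by linarith : (0:ℝ) ≤ 2*B))
        linarith [h4]
      have h3 : 0 ≤ ε0 * |a k| := mul_nonneg hε0 (abs_nonneg _)
      simp only [hh]; linarith
  -- summabilities
  have hsh : Summable h := ((hsa0.mul_left ε0).add (hsaβ.mul_left c2))
  have hsabs : Summable (fun k => |a k * (I k - f x)|) :=
    Summable.of_nonneg_of_le (fun k => abs_nonneg _) hterm hsh
  have hsprod : Summable (fun k => a k * (I k - f x)) := hsabs.of_abs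
  have hsaI : Summable (fun k => a k * I k) := by
    have hIb : ∀ k, |I k| ≤ B := by
      intro k
      have := int_est hw k hfmeas hfbd (c := 0) (C := B) (fun u _ => by simpa using hfbd u)
      simpa [hI, abs_mul] using this
    apply Summable.of_abs
    apply Summable.of_nonneg_of_le (fun k => abs_nonneg _) _ (hsa0.mul_right B)
    intro k
    rw [abs_mul]
    exact mul_le_mul_of_nonneg_left (hIb k) (abs_nonneg _)
  have hsaf : Summable (fun k => a k * f x) := hsa.mul_right _
  -- representation
  have hrepr : SK n χ f w x - f x = ∑' k, a k * (I k - f x) := by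
    have h1 : SK n χ f w x = ∑' k, a k * I k := rfl
    have h2 : (∑' k, a k * f x) = f x := by
      rw [tsum_mul_right, hχ2 wx, one_mul]
    have h3 : (∑' k, a k * (I k - f x)) = (∑' k, a k * I k) - ∑' k, a k * f x := by
      rw [← Summable.tsum_sub hsaI hsaf]
      congr 1
      ext k
      ring
    rw [h1, h3, h2]
  rw [hrepr]
  calc |∑' k, a k * (I k - f x)| ≤ ∑' k, |a k * (I k - f x)| := by
        simpa [Real.norm_eq_abs, ← abs_mul] using
          norm_tsum_le_tsum_norm (f := fun k : Fin n → ℤ => a k * (I k - f x))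
            (by simpa [Real.norm_eq_abs, abs_mul] using hsabs)
    _ ≤ ∑' k, h k := Summable.tsum_le_tsum hterm hsabs hsh
    _ = ε0 * (∑' k, |a k|) + c2 * (∑' k, |a k| * ‖wx - latticePt n k‖ ^ β) := by
        rw [hh, Summable.tsum_add (hsa0.mul_left ε0) (hsaβ.mul_left c2), tsum_mul_left, tsum_mul_left]
    _ ≤ ε0 * (mom n χ 0).toReal + c2 * (mom n χ β).toReal := by
        have := mul_le_mul_of_nonneg_left hta0 hε0
        have := mul_le_mul_of_nonneg_left htaβ hc2nn
        linarith

theorem stmt1 (n : ℕ) (χ f : EuclideanSpace ℝ (Fin n) → ℝ)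
    (hχmeas : Measurable χ)
    (hχ1 : Integrable χ)
    (hχbd : ∃ δ > (0:ℝ), ∃ M : ℝ, ∀ x : EuclideanSpace ℝ (Fin n), ‖x‖ ≤ δ → |χ x| ≤ M)
    (hχ2 : ∀ y : EuclideanSpace ℝ (Fin n), ∑' k : Fin n → ℤ, χ (y - latticePt n k) = 1)
    (hχ3 : ∃ β > (0:ℝ), mom n χ β < ⊤)
    (hχ0 : mom n χ 0 < ⊤)
    (hfmeas : Measurable f) (hfbd : ∃ B : ℝ, ∀ x, |f x| ≤ B)
    (hfuc : UniformContinuous f) :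
    Tendsto (fun w : ℝ => ⨆ x : EuclideanSpace ℝ (Fin n),
      ENNReal.ofReal |SK n χ f w x - f x|) atTop (nhds 0) := by
  obtain ⟨β, hβ, hmβ⟩ := hχ3
  obtain ⟨B, hB⟩ := hfbd
  have hB0 : 0 ≤ B := le_trans (abs_nonneg _) (hB 0)
  rw [ENNReal.tendsto_nhds_zero]
  intro ε hε
  obtain ⟨e, he0, hee⟩ : ∃ e : ℝ, 0 < e ∧ ENNReal.ofReal e ≤ ε := by
    rcases eq_or_ne ε ⊤ with h | h
    · exact ⟨1, one_pos, by simp [h]⟩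
    · exact ⟨ε.toReal, ENNReal.toReal_pos hε.ne' h, by rw [ENNReal.ofReal_toReal h]⟩
  set M0 := (mom n χ 0).toReal with hM0def
  set Mβ := (mom n χ β).toReal with hMβdef
  have hM0 : 0 ≤ M0 := ENNReal.toReal_nonneg
  set ε0 := e / (2*(M0+1)) with hε0def
  have hε0pos : 0 < ε0 := by positivity
  obtain ⟨δ, hδ, hδf⟩ : ∃ δ > (0:ℝ), ∀ u x : EuclideanSpace ℝ (Fin n),
      ‖u - x‖ ≤ δ/2 → |f u - f x| ≤ ε0 := by
    rcases Metric.uniformContinuous_iff.mp hfuc ε0 hε0pos with ⟨δ, hδp, hδf⟩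
    refine ⟨δ, hδp, fun u x h => ?_⟩
    have hd : dist u x < δ := by
      rw [dist_eq_norm]
      linarith
    exact (hδf hd).le
  have h1 : ∀ᶠ w : ℝ in atTop, Real.sqrt n / w ≤ δ/4 ∧ 0 < w := by
    filter_upwards [eventually_ge_atTop (max 1 (4*Real.sqrt n/δ))] with w hw
    have hw1 : (1:ℝ) ≤ w := le_trans (le_max_left _ _) hw
    have hw2 : 4*Real.sqrt n/δ ≤ w := le_trans (le_max_right _ _) hw
    have hwpos : 0 < w := lt_of_lt_of_le one_pos hw1
    refine ⟨?_, hwpos⟩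
    rw [div_le_iff₀ hwpos]
    rw [div_le_iff₀ hδ] at hw2
    nlinarith [Real.sqrt_nonneg (n:ℝ)]
  have h2 : ∀ᶠ w : ℝ in atTop, (2*B/(w*δ/4)^β) * Mβ < e/2 := by
    have hg : Tendsto (fun w : ℝ => (w*δ/4)^β) atTop atTop := by
      apply (tendsto_rpow_atTop hβ).comp
      have : Tendsto (fun w : ℝ => w * (δ/4)) atTop atTop :=
        Tendsto.atTop_mul_const (by positivity) tendsto_id
      refine this.congr fun w => by ring
    have hdiv : Tendsto (fun w : ℝ => (2*B/(w*δ/4)^β) * Mβ) atTop (nhds 0) := by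
      have := (tendsto_const_nhds (x := 2*B) (f := atTop (α := ℝ))).div_atTop hg
      simpa using this.mul_const Mβ
    exact hdiv.eventually (gt_mem_nhds (by positivity : (0:ℝ) < e/2))
  filter_upwards [h1, h2] with w hw1 hw2
  refine le_trans (iSup_le fun x => ?_) hee
  have hpb := pointwise_bound hχ2 hβ hmβ hχ0 hfmeas hB hB0 hw1.2 hδ hε0pos.le hw1.1 hδf x
  refine ENNReal.ofReal_le_ofReal (le_trans hpb ?_)
  have hl : ε0 * M0 ≤ e/2 := by
    rw [hε0def, div_mul_eq_mul_div, div_le_div_iff₀ (by positivity) (by norm_num)]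
    nlinarith
  linarith [hw2]
end

section
/- Let χ : ℝ² → ℝ be a kernel (satisfying (χ1), (χ2), (χ3) and m_0(χ) < ∞), and let I(x, y) := ∑_{i=1}^{n} ∑_{j=1}^{m} a_{ij} · 1_{(i−1, i] × (j−1, j]}(x, y) be the step function associated with an n × m real matrix (a_{ij}). Then I ∈ L^p(ℝ²) for every 1 ≤ p < ∞, and for every point (x, y) lying in the interior (i−1, i) × (j−1, j) of some pixel square, lim_{w → ∞} (S_w I)(x, y) = I(x, y) = a_{ij}. -/
open MeasureTheory Filter

/- ### Auxiliary lemmas -/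

lemma coord_abs_le_norm (y : EuclideanSpace ℝ (Fin 2)) (i : Fin 2) : |y i| ≤ ‖y‖ := by
  rw [EuclideanSpace.norm_eq]
  have h1 : |y i| = Real.sqrt (‖y i‖ ^ 2) := by
    rw [Real.sqrt_sq_eq_abs, Real.norm_eq_abs, abs_abs]
  rw [h1]
  exact Real.sqrt_le_sqrt
    (Finset.single_le_sum (f := fun j => ‖y j‖ ^ 2) (fun j _ => sq_nonneg _) (Finset.mem_univ i))

lemma mom_aux (χ : EuclideanSpace ℝ (Fin 2) → ℝ) (β : ℝ)
    (h : mom 2 χ β < ⊤) (u : EuclideanSpace ℝ (Fin 2)) :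
    Summable (fun k : Fin 2 → ℤ => |χ (u - latticePt 2 k)| * ‖u - latticePt 2 k‖ ^ β) ∧
    ∑' k : Fin 2 → ℤ, |χ (u - latticePt 2 k)| * ‖u - latticePt 2 k‖ ^ β ≤ (mom 2 χ β).toReal := by
  set f := fun k : Fin 2 → ℤ => |χ (u - latticePt 2 k)| * ‖u - latticePt 2 k‖ ^ β with hf
  have hfnn : ∀ k, 0 ≤ f k := fun k =>
    mul_nonneg (abs_nonneg _) (Real.rpow_nonneg (norm_nonneg _) _)
  have hle : ∑' k, ENNReal.ofReal (f k) ≤ mom 2 χ β :=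
    le_iSup (fun u => ∑' k : Fin 2 → ℤ,
      ENNReal.ofReal (|χ (u - latticePt 2 k)| * ‖u - latticePt 2 k‖ ^ β)) u
  have hne : ∑' k, ENNReal.ofReal (f k) ≠ ⊤ := (lt_of_le_of_lt hle h).ne
  have hsum : Summable f :=
    (ENNReal.summable_toReal hne).congr (fun k => ENNReal.toReal_ofReal (hfnn k))
  refine ⟨hsum, ?_⟩
  have heq : ∑' k, f k = (∑' k, ENNReal.ofReal (f k)).toReal := by
    rw [ENNReal.tsum_toReal_eq (fun k => ENNReal.ofReal_ne_top)]
    exact tsum_congr fun k => (ENNReal.toReal_ofReal (hfnn k)).symm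
  rw [heq]
  exact ENNReal.toReal_mono h.ne hle

lemma abs_summable (χ : EuclideanSpace ℝ (Fin 2) → ℝ) (hχ0 : mom 2 χ 0 < ⊤)
    (u : EuclideanSpace ℝ (Fin 2)) :
    Summable (fun k : Fin 2 → ℤ => |χ (u - latticePt 2 k)|) := by
  have := (mom_aux χ 0 hχ0 u).1
  simpa [Real.rpow_zero] using this

lemma measurableSet_coordSet (s : Fin 2 → Set ℝ) (hs : ∀ i, MeasurableSet (s i)) :
    MeasurableSet {u : EuclideanSpace ℝ (Fin 2) | ∀ i, u i ∈ s i} := by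
  have h : {u : EuclideanSpace ℝ (Fin 2) | ∀ i, u i ∈ s i}
      = ⋂ i, (fun u : EuclideanSpace ℝ (Fin 2) => u i) ⁻¹' s i := by
    ext u; simp [Set.mem_iInter]
  rw [h]
  exact MeasurableSet.iInter fun i => ((measurable_pi_apply i).comp (WithLp.measurable_ofLp 2 _)) (hs i)

lemma volume_coordSet (s : Fin 2 → Set ℝ) (hs : ∀ i, MeasurableSet (s i)) :
    volume {u : EuclideanSpace ℝ (Fin 2) | ∀ i, u i ∈ s i} = ∏ i, volume (s i) := by
  have hset : {u : EuclideanSpace ℝ (Fin 2) | ∀ i, u i ∈ s i}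
      = (MeasurableEquiv.toLp 2 (Fin 2 → ℝ)).symm ⁻¹' (Set.univ.pi s) := by
    ext u; simp [Set.mem_pi, MeasurableEquiv.coe_toLp_symm]
  rw [hset, MeasurePreserving.measure_preimage
    (EuclideanSpace.volume_preserving_symm_measurableEquiv_toLp (Fin 2))
    (MeasurableSet.univ_pi hs).nullMeasurableSet, volume_pi_pi]

lemma cell_measurable (w : ℝ) (k : Fin 2 → ℤ) : MeasurableSet (cell 2 w k) :=
  measurableSet_coordSet _ (fun _ => measurableSet_Icc)

lemma cell_volume (w : ℝ) (hw : 0 < w) (k : Fin 2 → ℤ) :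
    volume (cell 2 w k) = ENNReal.ofReal (1 / w ^ 2) := by
  have h := volume_coordSet (fun i => Set.Icc ((k i : ℝ) / w) (((k i : ℝ) + 1) / w))
    (fun _ => measurableSet_Icc)
  rw [show cell 2 w k = {u : EuclideanSpace ℝ (Fin 2) |
      ∀ i, u i ∈ Set.Icc ((k i : ℝ) / w) (((k i : ℝ) + 1) / w)} from rfl, h]
  have h2 : ∀ i : Fin 2, volume (Set.Icc ((k i : ℝ) / w) (((k i : ℝ) + 1) / w))
      = ENNReal.ofReal (1 / w) := by
    intro i
    rw [Real.volume_Icc]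
    congr 1
    field_simp
    ring
  simp only [h2, Finset.prod_const, Finset.card_univ, Fintype.card_fin]
  rw [← ENNReal.ofReal_pow (by positivity)]
  congr 1
  field_simp

lemma cell_volume_toReal (w : ℝ) (hw : 0 < w) (k : Fin 2 → ℤ) :
    (volume (cell 2 w k)).toReal = 1 / w ^ 2 := by
  rw [cell_volume w hw k, ENNReal.toReal_ofReal (by positivity)]

lemma ioc_nat_unique {p q : ℕ} {t : ℝ} (hp : t ∈ Set.Ioc (p : ℝ) ((p : ℝ) + 1))
    (hq : t ∈ Set.Ioc (q : ℝ) ((q : ℝ) + 1)) : p = q := by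
  by_contra h
  rcases Nat.lt_or_ge p q with hlt | hge
  · have h1 : (p : ℝ) + 1 ≤ q := by exact_mod_cast Nat.succ_le_of_lt hlt
    have := hp.2; have := hq.1; linarith
  · have hlt : q < p := lt_of_le_of_ne hge (Ne.symm h)
    have h1 : (q : ℝ) + 1 ≤ p := by exact_mod_cast Nat.succ_le_of_lt hlt
    have := hq.2; have := hp.1; linarith

lemma cell_subset_ball (w δ : ℝ) (hw : 0 < w) (hδ : 0 < δ)
    (hw2 : 2 * Real.sqrt 2 / δ ≤ w) (k : Fin 2 → ℤ) (x : EuclideanSpace ℝ (Fin 2))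
    (hk : ‖w • x - latticePt 2 k‖ < w * δ / 2) :
    cell 2 w k ⊆ Metric.closedBall x δ := by
  intro u hu
  rw [Metric.mem_closedBall, dist_eq_norm]
  set y : EuclideanSpace ℝ (Fin 2) := w⁻¹ • latticePt 2 k with hy
  have hyc : ∀ i, y i = (k i : ℝ) / w := by
    intro i
    simp [hy, latticePt, PiLp.smul_apply, smul_eq_mul, div_eq_inv_mul]
  have h1 : ‖u - y‖ ≤ Real.sqrt 2 / w := by
    rw [EuclideanSpace.norm_eq]
    have hb : ∀ i, ‖(u - y) i‖ ^ 2 ≤ (1 / w) ^ 2 := by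
      intro i
      have hui := hu i
      rw [PiLp.sub_apply, Real.norm_eq_abs, sq_abs, hyc i]
      have h1 : (k i : ℝ) / w ≤ u i := hui.1
      have h2 : u i ≤ ((k i : ℝ) + 1) / w := hui.2
      have h3 : ((k i : ℝ) + 1) / w - (k i : ℝ) / w = 1 / w := by field_simp; ring
      nlinarith [sq_nonneg (u i - (k i : ℝ) / w), one_div_pos.mpr hw]
    have hsum : ∑ i : Fin 2, ‖(u - y) i‖ ^ 2 ≤ 2 * (1 / w) ^ 2 := by
      have := Finset.sum_le_sum (fun i (_ : i ∈ Finset.univ) => hb i)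
      simpa [Finset.sum_const, Finset.card_univ] using this
    calc Real.sqrt (∑ i : Fin 2, ‖(u - y) i‖ ^ 2) ≤ Real.sqrt (2 * (1 / w) ^ 2) :=
          Real.sqrt_le_sqrt hsum
      _ = Real.sqrt 2 * (1 / w) := by
          rw [Real.sqrt_mul (by norm_num), Real.sqrt_sq (by positivity)]
      _ = Real.sqrt 2 / w := by ring
  have h2 : ‖y - x‖ < δ / 2 := by
    have hyx : y - x = w⁻¹ • (latticePt 2 k - w • x) := by
      rw [smul_sub, inv_smul_smul₀ hw.ne']
    rw [hyx, norm_smul, Real.norm_eq_abs, abs_of_pos (inv_pos.mpr hw), norm_sub_rev]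
    calc w⁻¹ * ‖w • x - latticePt 2 k‖ < w⁻¹ * (w * δ / 2) :=
          mul_lt_mul_of_pos_left hk (inv_pos.mpr hw)
      _ = δ / 2 := by field_simp
  have h3 : Real.sqrt 2 / w ≤ δ / 2 := by
    rw [div_le_div_iff₀ hw (by norm_num)]
    have := (div_le_iff₀ hδ).mp hw2
    linarith
  calc ‖u - x‖ = ‖(u - y) + (y - x)‖ := by abel_nf
    _ ≤ ‖u - y‖ + ‖y - x‖ := norm_add_le _ _
    _ ≤ Real.sqrt 2 / w + δ / 2 := add_le_add h1 h2.le
    _ ≤ δ := by linarith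

section main

variable {N M : ℕ} (a : Fin N → Fin M → ℝ) (I : EuclideanSpace ℝ (Fin 2) → ℝ)
  (hI : ∀ x : EuclideanSpace ℝ (Fin 2),
      I x = ∑ i : Fin N, ∑ j : Fin M,
        if x 0 ∈ Set.Ioc ((i : ℕ) : ℝ) ((i : ℕ) + 1) ∧
           x 1 ∈ Set.Ioc ((j : ℕ) : ℝ) ((j : ℕ) + 1) then a i j else 0)

include hI

lemma I_eq (i : Fin N) (j : Fin M) (u : EuclideanSpace ℝ (Fin 2))
    (hu0 : u 0 ∈ Set.Ioc ((i : ℕ) : ℝ) ((i : ℕ) + 1))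
    (hu1 : u 1 ∈ Set.Ioc ((j : ℕ) : ℝ) ((j : ℕ) + 1)) : I u = a i j := by
  rw [hI]
  rw [Finset.sum_eq_single i]
  · rw [Finset.sum_eq_single j]
    · rw [if_pos ⟨hu0, hu1⟩]
    · intro j' _ hj'
      rw [if_neg]
      rintro ⟨_, h1⟩
      exact hj' (Fin.ext (ioc_nat_unique h1 hu1))
    · intro h; exact absurd (Finset.mem_univ j) h
  · intro i' _ hi'
    apply Finset.sum_eq_zero
    intro j' _
    rw [if_neg]
    rintro ⟨h0, _⟩
    exact hi' (Fin.ext (ioc_nat_unique h0 hu0))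
  · intro h; exact absurd (Finset.mem_univ i) h

lemma I_abs_le (u : EuclideanSpace ℝ (Fin 2)) :
    |I u| ≤ ∑ i : Fin N, ∑ j : Fin M, |a i j| := by
  rw [hI]
  refine (Finset.abs_sum_le_sum_abs _ _).trans (Finset.sum_le_sum fun i _ => ?_)
  refine (Finset.abs_sum_le_sum_abs _ _).trans (Finset.sum_le_sum fun j _ => ?_)
  split_ifs <;> simp

lemma I_memLp (p : ℝ) : MemLp I (ENNReal.ofReal p) := by
  have hEq : I = fun x => ∑ i : Fin N, ∑ j : Fin M,
      Set.indicator {u : EuclideanSpace ℝ (Fin 2) |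
          u 0 ∈ Set.Ioc ((i : ℕ) : ℝ) ((i : ℕ) + 1) ∧
          u 1 ∈ Set.Ioc ((j : ℕ) : ℝ) ((j : ℕ) + 1)} (fun _ => a i j) x := by
    funext x
    rw [hI]
    refine Finset.sum_congr rfl fun i _ => Finset.sum_congr rfl fun j _ => ?_
    rw [Set.indicator_apply]
    rfl
  rw [hEq]
  apply memLp_finset_sum
  intro i _
  apply memLp_finset_sum
  intro j _
  have hSeq : {u : EuclideanSpace ℝ (Fin 2) |
      u 0 ∈ Set.Ioc ((i : ℕ) : ℝ) ((i : ℕ) + 1) ∧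
      u 1 ∈ Set.Ioc ((j : ℕ) : ℝ) ((j : ℕ) + 1)}
      = {u : EuclideanSpace ℝ (Fin 2) | ∀ t : Fin 2,
          u t ∈ (![Set.Ioc ((i : ℕ) : ℝ) ((i : ℕ) + 1),
                   Set.Ioc ((j : ℕ) : ℝ) ((j : ℕ) + 1)] : Fin 2 → Set ℝ) t} := by
    ext u
    simp [Fin.forall_fin_two]
  have hms : ∀ t : Fin 2, MeasurableSet
      ((![Set.Ioc ((i : ℕ) : ℝ) ((i : ℕ) + 1),
          Set.Ioc ((j : ℕ) : ℝ) ((j : ℕ) + 1)] : Fin 2 → Set ℝ) t) := by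
    intro t
    fin_cases t <;> exact measurableSet_Ioc
  apply memLp_indicator_const
  · rw [hSeq]; exact measurableSet_coordSet _ hms
  · right
    rw [hSeq, volume_coordSet _ hms]
    simp [Fin.prod_univ_two, Real.volume_Ioc]

end main

set_option maxHeartbeats 1000000 in
theorem stmt17 (χ : EuclideanSpace ℝ (Fin 2) → ℝ)
    (hχmeas : Measurable χ)
    (hχ1 : Integrable χ)
    (hχbd : ∃ δ > (0:ℝ), ∃ M : ℝ, ∀ x : EuclideanSpace ℝ (Fin 2), ‖x‖ ≤ δ → |χ x| ≤ M)
    (hχ2 : ∀ y : EuclideanSpace ℝ (Fin 2), ∑' k : Fin 2 → ℤ, χ (y - latticePt 2 k) = 1)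
    (hχ3 : ∃ β > (0:ℝ), mom 2 χ β < ⊤)
    (hχ0 : mom 2 χ 0 < ⊤)
    (N M : ℕ) (a : Fin N → Fin M → ℝ)
    (I : EuclideanSpace ℝ (Fin 2) → ℝ)
    (hI : ∀ x : EuclideanSpace ℝ (Fin 2),
      I x = ∑ i : Fin N, ∑ j : Fin M,
        if x 0 ∈ Set.Ioc ((i : ℕ) : ℝ) ((i : ℕ) + 1) ∧
           x 1 ∈ Set.Ioc ((j : ℕ) : ℝ) ((j : ℕ) + 1) then a i j else 0) :
    (∀ p : ℝ, 1 ≤ p → MemLp I (ENNReal.ofReal p)) ∧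
    ∀ (i : Fin N) (j : Fin M) (x : EuclideanSpace ℝ (Fin 2)),
      x 0 ∈ Set.Ioo ((i : ℕ) : ℝ) ((i : ℕ) + 1) →
      x 1 ∈ Set.Ioo ((j : ℕ) : ℝ) ((j : ℕ) + 1) →
      I x = a i j ∧
      Tendsto (fun w : ℝ => SK 2 χ I w x) atTop (nhds (I x)) := by
  refine ⟨fun p _ => I_memLp a I hI p, ?_⟩
  have hIint : Integrable I := by
    have h := I_memLp a I hI 1
    rwa [ENNReal.ofReal_one, memLp_one_iff_integrable] at h
  intro i j x hx0 hx1
  obtain ⟨β, hβ, hmomβ⟩ := hχ3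
  set c := a i j with hc
  have hIx : I x = c := I_eq a I hI i j x ⟨hx0.1, hx0.2.le⟩ ⟨hx1.1, hx1.2.le⟩
  refine ⟨hIx, ?_⟩
  rw [hIx]
  set maxA := ∑ i : Fin N, ∑ j : Fin M, |a i j| with hmaxA
  have hmaxA0 : 0 ≤ maxA :=
    Finset.sum_nonneg fun _ _ => Finset.sum_nonneg fun _ _ => abs_nonneg _
  set C := maxA + |c| with hCdef
  have hC0 : 0 ≤ C := by positivity
  set Mβ := (mom 2 χ β).toReal with hMβ
  have hMβ0 : 0 ≤ Mβ := ENNReal.toReal_nonneg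
  set δ := (min (min (x 0 - ((i : ℕ) : ℝ)) (((i : ℕ) : ℝ) + 1 - x 0))
      (min (x 1 - ((j : ℕ) : ℝ)) (((j : ℕ) : ℝ) + 1 - x 1))) / 2 with hδdef
  have hδ : 0 < δ := by
    apply div_pos _ two_pos
    exact lt_min (lt_min (by linarith [hx0.1]) (by linarith [hx0.2]))
      (lt_min (by linarith [hx1.1]) (by linarith [hx1.2]))
  have hδa : δ ≤ (x 0 - ((i : ℕ) : ℝ)) / 2 := by
    have : min (min (x 0 - ((i : ℕ) : ℝ)) (((i : ℕ) : ℝ) + 1 - x 0))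
        (min (x 1 - ((j : ℕ) : ℝ)) (((j : ℕ) : ℝ) + 1 - x 1)) ≤ x 0 - ((i : ℕ) : ℝ) :=
      le_trans (min_le_left _ _) (min_le_left _ _)
    rw [hδdef]; linarith
  have hδb : δ ≤ (((i : ℕ) : ℝ) + 1 - x 0) / 2 := by
    have : min (min (x 0 - ((i : ℕ) : ℝ)) (((i : ℕ) : ℝ) + 1 - x 0))
        (min (x 1 - ((j : ℕ) : ℝ)) (((j : ℕ) : ℝ) + 1 - x 1)) ≤ ((i : ℕ) : ℝ) + 1 - x 0 :=
      le_trans (min_le_left _ _) (min_le_right _ _)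
    rw [hδdef]; linarith
  have hδc : δ ≤ (x 1 - ((j : ℕ) : ℝ)) / 2 := by
    have : min (min (x 0 - ((i : ℕ) : ℝ)) (((i : ℕ) : ℝ) + 1 - x 0))
        (min (x 1 - ((j : ℕ) : ℝ)) (((j : ℕ) : ℝ) + 1 - x 1)) ≤ x 1 - ((j : ℕ) : ℝ) :=
      le_trans (min_le_right _ _) (min_le_left _ _)
    rw [hδdef]; linarith
  have hδd : δ ≤ (((j : ℕ) : ℝ) + 1 - x 1) / 2 := by
    have : min (min (x 0 - ((i : ℕ) : ℝ)) (((i : ℕ) : ℝ) + 1 - x 0))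
        (min (x 1 - ((j : ℕ) : ℝ)) (((j : ℕ) : ℝ) + 1 - x 1)) ≤ ((j : ℕ) : ℝ) + 1 - x 1 :=
      le_trans (min_le_right _ _) (min_le_right _ _)
    rw [hδdef]; linarith
  have hball : ∀ u ∈ Metric.closedBall x δ, I u = c := by
    intro u hu
    rw [Metric.mem_closedBall, dist_eq_norm] at hu
    have h0 := (coord_abs_le_norm (u - x) 0).trans hu
    have h1 := (coord_abs_le_norm (u - x) 1).trans hu
    rw [PiLp.sub_apply, abs_le] at h0 h1
    apply I_eq a I hI i j
    · exact ⟨by linarith [hx0.1, h0.1], by linarith [hx0.2, h0.2]⟩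
    · exact ⟨by linarith [hx1.1, h1.1], by linarith [hx1.2, h1.2]⟩
  set w0 := max 1 (2 * Real.sqrt 2 / δ) with hw0def
  have key : ∀ w : ℝ, w0 ≤ w →
      |SK 2 χ I w x - c| ≤ (C * Mβ * (δ / 2) ^ (-β)) * w ^ (-β) := by
    intro w hw
    have hw1 : (1 : ℝ) ≤ w := le_trans (le_max_left _ _) hw
    have hwpos : 0 < w := lt_of_lt_of_le one_pos hw1
    have hw2 : 2 * Real.sqrt 2 / δ ≤ w := le_trans (le_max_right _ _) hw
    set g : (Fin 2 → ℤ) → ℝ := fun k => χ (w • x - latticePt 2 k) with hg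
    set A : (Fin 2 → ℤ) → ℝ := fun k => w ^ 2 * ∫ u in cell 2 w k, I u with hA
    have hSg : Summable fun k => |g k| := abs_summable χ hχ0 (w • x)
    have hAbd : ∀ k, |A k| ≤ maxA := by
      intro k
      have hint : |∫ u in cell 2 w k, I u| ≤ maxA * (volume (cell 2 w k)).toReal := by
        have h := norm_setIntegral_le_of_norm_le_const (μ := volume) (s := cell 2 w k)
          (C := maxA) (f := I)
          (by rw [cell_volume w hwpos k]; exact ENNReal.ofReal_lt_top)
          (fun u _ => by rw [Real.norm_eq_abs]; exact I_abs_le a I hI u)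
        rw [Real.norm_eq_abs] at h; exact h
      rw [cell_volume_toReal w hwpos k] at hint
      have : |A k| = w ^ 2 * |∫ u in cell 2 w k, I u| := by
        rw [hA]; simp only; rw [abs_mul, abs_of_pos (by positivity)]
      rw [this]
      calc w ^ 2 * |∫ u in cell 2 w k, I u| ≤ w ^ 2 * (maxA * (1 / w ^ 2)) := by
            exact mul_le_mul_of_nonneg_left hint (by positivity)
        _ = maxA := by field_simp
    have hgood : ∀ k, ‖w • x - latticePt 2 k‖ < w * δ / 2 → A k = c := by
      intro k hk
      have hsub := cell_subset_ball w δ hwpos hδ hw2 k x hk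
      have hIc : ∀ u ∈ cell 2 w k, I u = c := fun u hu => hball u (hsub hu)
      rw [hA]
      simp only
      rw [setIntegral_congr_fun (cell_measurable w k) hIc, setIntegral_const,
        smul_eq_mul, measureReal_def, cell_volume_toReal w hwpos k]
      field_simp
    have hstar : ∀ k, |g k * (A k - c)| ≤ (C * (w * δ / 2) ^ (-β)) *
        (|g k| * ‖w • x - latticePt 2 k‖ ^ β) := by
      intro k
      rcases lt_or_ge ‖w • x - latticePt 2 k‖ (w * δ / 2) with hk | hk
      · rw [hgood k hk]
        simp only [sub_self, mul_zero, abs_zero]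
        positivity
      · have hwd : 0 < w * δ / 2 := by positivity
        have hAc : |A k - c| ≤ C := by
          calc |A k - c| ≤ |A k| + |c| := abs_sub _ _
            _ ≤ maxA + |c| := by linarith [hAbd k]
        have hr1 : (w * δ / 2) ^ β ≤ ‖w • x - latticePt 2 k‖ ^ β :=
          Real.rpow_le_rpow hwd.le hk hβ.le
        have hr2 : (1 : ℝ) ≤ (w * δ / 2) ^ (-β) * ‖w • x - latticePt 2 k‖ ^ β := by
          rw [Real.rpow_neg hwd.le]
          calc (1 : ℝ) = ((w * δ / 2) ^ β)⁻¹ * (w * δ / 2) ^ β := by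
                rw [inv_mul_cancel₀ (ne_of_gt (Real.rpow_pos_of_pos hwd β))]
            _ ≤ ((w * δ / 2) ^ β)⁻¹ * ‖w • x - latticePt 2 k‖ ^ β :=
                mul_le_mul_of_nonneg_left hr1 (by positivity)
        calc |g k * (A k - c)| = |g k| * |A k - c| := abs_mul _ _
          _ ≤ |g k| * C := mul_le_mul_of_nonneg_left hAc (abs_nonneg _)
          _ = (C * |g k|) * 1 := by ring
          _ ≤ (C * |g k|) * ((w * δ / 2) ^ (-β) * ‖w • x - latticePt 2 k‖ ^ β) :=
                mul_le_mul_of_nonneg_left hr2 (by positivity)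
          _ = (C * (w * δ / 2) ^ (-β)) * (|g k| * ‖w • x - latticePt 2 k‖ ^ β) := by ring
    have hSβ := mom_aux χ β hmomβ (w • x)
    have hSgA : Summable fun k => g k * A k := by
      apply Summable.of_abs
      exact Summable.of_nonneg_of_le (fun k => abs_nonneg _)
        (fun k => by rw [abs_mul]; exact mul_le_mul_of_nonneg_left (hAbd k) (abs_nonneg _))
        (hSg.mul_right maxA)
    have hSgAc : Summable fun k => |g k * (A k - c)| :=
      Summable.of_nonneg_of_le (fun k => abs_nonneg _) hstar (hSβ.1.mul_left _)
    have hSK : SK 2 χ I w x - c = ∑' k, g k * (A k - c) := by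
      have h1 : SK 2 χ I w x = ∑' k, g k * A k := rfl
      have h2 : (∑' k, g k * c) = c := by
        rw [tsum_mul_right, hχ2 (w • x), one_mul]
      have h3 : ∑' k, g k * (A k - c) = (∑' k, g k * A k) - ∑' k, g k * c := by
        rw [← Summable.tsum_sub hSgA ((hSg.of_abs).mul_right c)]
        exact tsum_congr fun k => mul_sub _ _ _
      rw [h1, h3, h2]
    have hnorm : |∑' k, g k * (A k - c)| ≤ ∑' k, |g k * (A k - c)| := by
      have h := norm_tsum_le_tsum_norm (f := fun k => g k * (A k - c))
        (by simpa only [Real.norm_eq_abs] using hSgAc)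
      simpa only [Real.norm_eq_abs] using h
    rw [hSK]
    calc |∑' k, g k * (A k - c)| ≤ ∑' k, |g k * (A k - c)| := hnorm
      _ ≤ ∑' k, (C * (w * δ / 2) ^ (-β)) * (|g k| * ‖w • x - latticePt 2 k‖ ^ β) :=
          Summable.tsum_le_tsum hstar hSgAc (hSβ.1.mul_left _)
      _ = (C * (w * δ / 2) ^ (-β)) *
          ∑' k, |g k| * ‖w • x - latticePt 2 k‖ ^ β := tsum_mul_left
      _ ≤ (C * (w * δ / 2) ^ (-β)) * Mβ :=
          mul_le_mul_of_nonneg_left hSβ.2 (by positivity)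
      _ = (C * Mβ * (δ / 2) ^ (-β)) * w ^ (-β) := by
          rw [show w * δ / 2 = w * (δ / 2) by ring,
            Real.mul_rpow hwpos.le (by positivity)]
          ring
  have hbound : Tendsto (fun w : ℝ => (C * Mβ * (δ / 2) ^ (-β)) * w ^ (-β)) atTop (nhds 0) := by
    have h := (tendsto_rpow_neg_atTop hβ).const_mul (C * Mβ * (δ / 2) ^ (-β))
    simpa using h
  rw [tendsto_iff_norm_sub_tendsto_zero]
  refine squeeze_zero' (Eventually.of_forall fun w => norm_nonneg _) ?_ hbound
  filter_upwards [eventually_ge_atTop w0] with w hw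
  rw [Real.norm_eq_abs]
  exact key w hw
end
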